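/- Define T_N : Mₙ(ℂ) → M_{n^N}(ℂ) by T_N(A) = (1/N) ∑_{k=0}^{N-1} I^{⊗(N-1-k)} ⊗ A ⊗ I^{⊗k}. Then for all A, B ∈ Mₙ(ℂ): [T_N(A), T_N(B)] = (1/N)·T_N([A, B]). In particular ‖[T_N(A), T_N(B)]‖ ≤ (1/N)‖[A,B]‖. -/

import Mathlib

set_option maxHeartbeats 1000000
set_option synthInstance.maxHeartbeats 400000

open Finset



/-- The ℓ²→ℓ² operator norm of a square complex matrix (arbitrary finite index type). -/
noncomputable def opNorm {m : Type*} [Fintype m] [DecidableEq m] (A : Matrix m m ℂ) : ℝ :=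
  ‖Matrix.toEuclideanCLM (𝕜 := ℂ) A‖

/-- The operator `I^{⊗(N-1-k)} ⊗ A ⊗ I^{⊗k}` acting on the `N`-fold tensor power
`(ℂⁿ)^{⊗N}`, realized on the index set `Fin N → Fin n`: `A` acts in the `k`-th tensor
factor and the identity in all the others. -/
def embedAt {n N : ℕ} (k : Fin N) (A : Matrix (Fin n) (Fin n) ℂ) :
    Matrix (Fin N → Fin n) (Fin N → Fin n) ℂ :=
  Matrix.of fun x y =>
    A (x k) (y k) * ∏ j ∈ Finset.univ.erase k, (if x j = y j then (1 : ℂ) else 0)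

lemma sum_agree {n N : ℕ} (k : Fin N) (x : Fin N → Fin n) (f : (Fin N → Fin n) → ℂ) :
    ∑ z : Fin N → Fin n,
      (∏ j ∈ Finset.univ.erase k, (if x j = z j then (1:ℂ) else 0)) * f z
      = ∑ i : Fin n, f (Function.update x k i) := by
  classical
  simp only [Finset.prod_boole, ite_mul, one_mul, zero_mul]
  rw [show (∑ z : Fin N → Fin n, if ∀ j ∈ Finset.univ.erase k, x j = z j then f z else 0)
      = ∑ z ∈ Finset.univ.filter (fun z => ∀ j ∈ Finset.univ.erase k, x j = z j), f z from
    (Finset.sum_filter _ _).symm]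
  apply Finset.sum_nbij' (fun z => z k) (fun i => Function.update x k i)
  · intro z _; exact Finset.mem_univ _
  · intro i _
    simp only [Finset.mem_filter, Finset.mem_univ, true_and, Finset.mem_erase]
    rintro j ⟨hj, -⟩
    exact (Function.update_of_ne hj i x).symm
  · intro z hz
    simp only [Finset.mem_filter, Finset.mem_univ, true_and] at hz
    funext j
    rcases eq_or_ne j k with rfl | hj
    · rw [Function.update_self]
    · rw [Function.update_of_ne hj]
      exact hz j (Finset.mem_erase.mpr ⟨hj, Finset.mem_univ _⟩)
  · intro i _; exact Function.update_self ..
  · intro z hz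
    simp only [Finset.mem_filter, Finset.mem_univ, true_and] at hz
    congr 1
    funext j
    rcases eq_or_ne j k with rfl | hj
    · rw [Function.update_self]
    · rw [Function.update_of_ne hj]
      exact (hz j (Finset.mem_erase.mpr ⟨hj, Finset.mem_univ _⟩)).symm

lemma embedAt_mul {n N : ℕ} (k : Fin N) (A B : Matrix (Fin n) (Fin n) ℂ) :
    embedAt k A * embedAt k B = embedAt k (A * B) := by
  ext x y
  rw [Matrix.mul_apply]
  simp only [embedAt, Matrix.of_apply]
  have : ∀ z : Fin N → Fin n, (A (x k) (z k) * ∏ j ∈ univ.erase k, (if x j = z j then (1:ℂ) else 0)) *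
      (B (z k) (y k) * ∏ j ∈ univ.erase k, (if z j = y j then (1:ℂ) else 0))
      = (∏ j ∈ univ.erase k, (if x j = z j then (1:ℂ) else 0)) *
        (A (x k) (z k) * B (z k) (y k) * ∏ j ∈ univ.erase k, (if z j = y j then (1:ℂ) else 0)) := by
    intro z; ring
  simp_rw [this, sum_agree k x]
  have h2 : ∀ i : Fin n, Function.update x k i k = i := fun i => Function.update_self ..
  have h3 : ∀ i : Fin n, ∏ j ∈ univ.erase k, (if Function.update x k i j = y j then (1:ℂ) else 0)
      = ∏ j ∈ univ.erase k, (if x j = y j then (1:ℂ) else 0) := by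
    intro i
    apply Finset.prod_congr rfl
    intro j hj
    rw [Function.update_of_ne (Finset.mem_erase.mp hj).1]
  simp_rw [h2, h3, Matrix.mul_apply, Finset.sum_mul]

lemma embedAt_mul_comm {n N : ℕ} {k l : Fin N} (hkl : k ≠ l) (A B : Matrix (Fin n) (Fin n) ℂ) :
    embedAt k A * embedAt l B =
      Matrix.of (fun x y => A (x k) (y k) * B (x l) (y l) *
        ∏ j ∈ (univ.erase k).erase l, (if x j = y j then (1:ℂ) else 0)) := by
  ext x y
  rw [Matrix.mul_apply]
  simp only [embedAt, Matrix.of_apply]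
  have : ∀ z : Fin N → Fin n, (A (x k) (z k) * ∏ j ∈ univ.erase k, (if x j = z j then (1:ℂ) else 0)) *
      (B (z l) (y l) * ∏ j ∈ univ.erase l, (if z j = y j then (1:ℂ) else 0))
      = (∏ j ∈ univ.erase k, (if x j = z j then (1:ℂ) else 0)) *
        (A (x k) (z k) * B (z l) (y l) * ∏ j ∈ univ.erase l, (if z j = y j then (1:ℂ) else 0)) := by
    intro z; ring
  simp_rw [this, sum_agree k x]
  have hk : k ∈ univ.erase l := Finset.mem_erase.mpr ⟨hkl, Finset.mem_univ _⟩
  have hsplit : ∀ i : Fin n,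
      ∏ j ∈ univ.erase l, (if Function.update x k i j = y j then (1:ℂ) else 0)
      = (if i = y k then (1:ℂ) else 0) *
        ∏ j ∈ (univ.erase l).erase k, (if x j = y j then (1:ℂ) else 0) := by
    intro i
    rw [← Finset.mul_prod_erase _ _ hk, Function.update_self]
    congr 1
    apply Finset.prod_congr rfl
    intro j hj
    rw [Function.update_of_ne (Finset.mem_erase.mp hj).1]
  simp_rw [hsplit, Function.update_self, Function.update_of_ne (Ne.symm hkl)]
  rw [Finset.erase_right_comm]
  rw [Finset.sum_eq_single (y k)]
  · simp
  · intro i _ hi; simp [hi]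
  · intro h; exact absurd (Finset.mem_univ _) h

lemma embedAt_comm {n N : ℕ} {k l : Fin N} (hkl : k ≠ l) (A B : Matrix (Fin n) (Fin n) ℂ) :
    embedAt k A * embedAt l B = embedAt l B * embedAt k A := by
  rw [embedAt_mul_comm hkl, embedAt_mul_comm hkl.symm]
  ext x y
  simp only [Matrix.of_apply]
  rw [Finset.erase_right_comm]
  ring



lemma embedAt_add {n N : ℕ} (k : Fin N) (A B : Matrix (Fin n) (Fin n) ℂ) :
    embedAt k (A + B) = embedAt k A + embedAt k B := by
  ext x y; simp [embedAt, add_mul]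

lemma embedAt_sub {n N : ℕ} (k : Fin N) (A B : Matrix (Fin n) (Fin n) ℂ) :
    embedAt k (A - B) = embedAt k A - embedAt k B := by
  ext x y; simp [embedAt, sub_mul]

lemma embedAt_smul {n N : ℕ} (k : Fin N) (c : ℂ) (A : Matrix (Fin n) (Fin n) ℂ) :
    embedAt k (c • A) = c • embedAt k A := by
  ext x y; simp [embedAt, mul_assoc]

lemma embedAt_zero {n N : ℕ} (k : Fin N) :
    embedAt k (0 : Matrix (Fin n) (Fin n) ℂ) = 0 := by
  ext x y; simp [embedAt]

lemma embedAt_star {n N : ℕ} (k : Fin N) (A : Matrix (Fin n) (Fin n) ℂ) :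
    embedAt k (star A) = star (embedAt k A) := by
  ext x y
  simp only [embedAt, Matrix.of_apply, Matrix.star_apply, star_mul']
  congr 1
  · rw [star_prod]
    refine Finset.prod_congr rfl fun j _ => ?_
    rcases eq_or_ne (x j) (y j) with h | h
    · simp [h]
    · simp [h, Ne.symm h]

noncomputable def embedCLM {n N : ℕ} (k : Fin N) :
    (EuclideanSpace ℂ (Fin n) →L[ℂ] EuclideanSpace ℂ (Fin n)) →⋆ₙₐ[ℂ]
      (EuclideanSpace ℂ (Fin N → Fin n) →L[ℂ] EuclideanSpace ℂ (Fin N → Fin n)) where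
  toFun f := Matrix.toEuclideanCLM (𝕜 := ℂ)
    (embedAt k ((Matrix.toEuclideanCLM (𝕜 := ℂ)).symm f))
  map_smul' c f := by rw [map_smul, embedAt_smul, map_smul]; simp
  map_zero' := by rw [map_zero, embedAt_zero, map_zero]
  map_add' f g := by rw [map_add, embedAt_add, map_add]
  map_mul' f g := by rw [map_mul, ← embedAt_mul, map_mul]
  map_star' f := by rw [map_star, embedAt_star, map_star]

lemma opNorm_embedAt_le {n N : ℕ} (k : Fin N) (A : Matrix (Fin n) (Fin n) ℂ) :
    opNorm (embedAt k A) ≤ opNorm A := by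
  have h := NonUnitalStarAlgHom.norm_apply_le (embedCLM (n := n) k)
    (Matrix.toEuclideanCLM (𝕜 := ℂ) A)
  simpa [opNorm, embedCLM] using h

/-- The macroscopic-observable map `T_N(A) = (1/N) ∑_{k=0}^{N-1} I^{⊗(N-1-k)} ⊗ A ⊗ I^{⊗k}`. -/
noncomputable def T (n N : ℕ) (A : Matrix (Fin n) (Fin n) ℂ) :
    Matrix (Fin N → Fin n) (Fin N → Fin n) ℂ :=
  ((N : ℂ))⁻¹ • ∑ k : Fin N, embedAt k A

lemma T_comm (n N : ℕ) (A B : Matrix (Fin n) (Fin n) ℂ) :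
    T n N A * T n N B - T n N B * T n N A = ((N : ℂ))⁻¹ • T n N (A * B - B * A) := by
  unfold T
  rw [smul_mul_smul_comm, smul_mul_smul_comm, ← smul_sub, smul_smul]
  congr 1
  rw [Finset.sum_mul_sum, Finset.sum_mul_sum, Finset.sum_comm (s := univ) (t := univ)
    (f := fun k l => embedAt k B * embedAt l A), ← Finset.sum_sub_distrib]
  apply Finset.sum_congr rfl
  intro k _
  rw [← Finset.sum_sub_distrib, Finset.sum_eq_single k]
  · rw [embedAt_mul, embedAt_mul, ← embedAt_sub]
  · intro l _ hlk
    rw [embedAt_comm (Ne.symm hlk), sub_self]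
  · intro h; exact absurd (Finset.mem_univ _) h

lemma opNorm_T_le (n N : ℕ) (hN : 0 < N) (C : Matrix (Fin n) (Fin n) ℂ) :
    opNorm (T n N C) ≤ opNorm C := by
  unfold T opNorm
  rw [map_smul, map_sum]
  rw [norm_smul ((N:ℂ))⁻¹ (∑ k : Fin N, Matrix.toEuclideanCLM (𝕜 := ℂ) (embedAt k C))]
  have h1 : ‖((N : ℂ))⁻¹‖ = (N : ℝ)⁻¹ := by
    simp
  rw [h1]
  calc (N:ℝ)⁻¹ * ‖∑ k : Fin N, Matrix.toEuclideanCLM (𝕜 := ℂ) (embedAt k C)‖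
      ≤ (N:ℝ)⁻¹ * ∑ k : Fin N, ‖Matrix.toEuclideanCLM (𝕜 := ℂ) (embedAt k C)‖ := by
        gcongr; exact norm_sum_le _ _
    _ ≤ (N:ℝ)⁻¹ * ∑ _k : Fin N, ‖Matrix.toEuclideanCLM (𝕜 := ℂ) C‖ := by
        gcongr with k
        exact opNorm_embedAt_le k C
    _ = ‖Matrix.toEuclideanCLM (𝕜 := ℂ) C‖ := by
        rw [Finset.sum_const, Finset.card_univ, Fintype.card_fin, nsmul_eq_mul,
          ← mul_assoc, inv_mul_cancel₀ (by exact_mod_cast hN.ne')]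
        ring

/-- **Commutators of macroscopic observables.**
`[T_N(A), T_N(B)] = (1/N) T_N([A, B])`, and in particular
`‖[T_N(A), T_N(B)]‖ ≤ (1/N) ‖[A, B]‖`. -/
theorem stmt_17 (n N : ℕ) (hN : 0 < N) (A B : Matrix (Fin n) (Fin n) ℂ) :
    T n N A * T n N B - T n N B * T n N A = ((N : ℂ))⁻¹ • T n N (A * B - B * A) ∧
    opNorm (T n N A * T n N B - T n N B * T n N A) ≤ (1 / N) * opNorm (A * B - B * A) := by
  refine ⟨T_comm n N A B, ?_⟩
  rw [T_comm n N A B]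
  have h1 : opNorm (((N : ℂ))⁻¹ • T n N (A * B - B * A))
      = (N : ℝ)⁻¹ * opNorm (T n N (A * B - B * A)) := by
    unfold opNorm
    rw [map_smul]
    rw [norm_smul ((N:ℂ))⁻¹ (Matrix.toEuclideanCLM (𝕜 := ℂ) (T n N (A * B - B * A)))]
    simp
  rw [h1, one_div]
  gcongr
  exact opNorm_T_le n N hN _
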